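/- Let n, k be natural numbers with 0 < k < n and let ξ ∈ ℂ be a primitive n-th root of unity. Then the Gaussian binomial coefficient evaluated at ξ vanishes: binom(n,k)_ξ = 0 in ℂ. -/

import Mathlib

/-!
Vanishing of Gaussian binomial coefficients at primitive roots of unity in `ℂ`.

The Gaussian binomial coefficient is characterized by its defining formula
`binom(n,k)_q = [n]!_q / ([n-k]!_q ⬝ [k]!_q)` in the fraction field `ℚ(q)` of `ℤ[q]`;
we quantify over any family `B : ℕ → ℕ → ℤ[q]` satisfying this property, and
`binom(n,k)_ξ` is the image of `B n k` under evaluation `ℤ[q] → ℂ`, `q ↦ ξ`.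
-/

/-- The image of the variable `q` in the fraction field of `ℤ[q]`. -/
noncomputable def qq : FractionRing (Polynomial ℤ) :=
  algebraMap (Polynomial ℤ) (FractionRing (Polynomial ℤ)) Polynomial.X

/-- The q-bracket `[n]_q = 1 + q + ... + q^(n-1)`. -/
noncomputable def qBracket (n : ℕ) : FractionRing (Polynomial ℤ) :=
  ∑ i ∈ Finset.range n, qq ^ i

/-- The q-factorial `[n]!_q = [1]_q ⬝ [2]_q ⬝ ... ⬝ [n]_q`. -/
noncomputable def qFactorial (n : ℕ) : FractionRing (Polynomial ℤ) :=
  ∏ i ∈ Finset.range n, qBracket (i + 1)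

/-- polynomial q-bracket -/
noncomputable def pBracket (n : ℕ) : Polynomial ℤ :=
  ∑ i ∈ Finset.range n, Polynomial.X ^ i

noncomputable def pFactorial (n : ℕ) : Polynomial ℤ :=
  ∏ i ∈ Finset.range n, pBracket (i + 1)

lemma map_pBracket (n : ℕ) :
    algebraMap (Polynomial ℤ) (FractionRing (Polynomial ℤ)) (pBracket n) = qBracket n := by
  simp [pBracket, qBracket, qq, map_sum, map_pow]

lemma map_pFactorial (n : ℕ) :
    algebraMap (Polynomial ℤ) (FractionRing (Polynomial ℤ)) (pFactorial n) = qFactorial n := by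
  simp [pFactorial, qFactorial, map_prod, map_pBracket]

lemma pBracket_ne_zero (n : ℕ) (hn : 0 < n) : pBracket n ≠ 0 := by
  intro h
  have := congrArg (Polynomial.eval 1) h
  simp [pBracket, Polynomial.eval_finset_sum] at this
  omega

lemma pFactorial_ne_zero (n : ℕ) : pFactorial n ≠ 0 :=
  Finset.prod_ne_zero_iff.mpr fun i _ => pBracket_ne_zero _ (Nat.succ_pos i)

lemma qFactorial_ne_zero (n : ℕ) : qFactorial n ≠ 0 := by
  rw [← map_pFactorial]
  exact fun h => pFactorial_ne_zero n (IsFractionRing.injective (Polynomial ℤ)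
    (FractionRing (Polynomial ℤ)) (by simpa using h))

/-- If `0 < k < n` and `ξ ∈ ℂ` is a primitive `n`-th root of unity, then the Gaussian
binomial coefficient evaluated at `ξ` vanishes: `binom(n,k)_ξ = 0` in `ℂ`. -/
theorem qBinom_eval_primitiveRoot_complex (B : ℕ → ℕ → Polynomial ℤ)
    (hB : ∀ n k : ℕ, k ≤ n →
      algebraMap (Polynomial ℤ) (FractionRing (Polynomial ℤ)) (B n k) =
        qFactorial n / (qFactorial (n - k) * qFactorial k))
    (n k : ℕ) (hk0 : 0 < k) (hkn : k < n)
    (ξ : ℂ) (hξ : IsPrimitiveRoot ξ n) :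
    Polynomial.aeval ξ (B n k) = 0 := by
  have h1 : (1 : ℕ) < n := lt_of_le_of_lt hk0 hkn
  -- polynomial identity
  have hpoly : B n k * (pFactorial (n - k) * pFactorial k) = pFactorial n := by
    apply IsFractionRing.injective (Polynomial ℤ) (FractionRing (Polynomial ℤ))
    rw [map_mul, map_mul, map_pFactorial, map_pFactorial, map_pFactorial,
      hB n k hkn.le, div_mul_cancel₀]
    exact mul_ne_zero (qFactorial_ne_zero _) (qFactorial_ne_zero _)
  have := congrArg (Polynomial.aeval ξ) hpoly
  rw [map_mul, map_mul] at this
  -- RHS vanishes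
  have hrhs : Polynomial.aeval ξ (pFactorial n) = 0 := by
    rw [pFactorial, map_prod]
    apply Finset.prod_eq_zero (Finset.mem_range.mpr (Nat.sub_lt (by omega) one_pos))
    rw [Nat.sub_add_cancel (by omega : 1 ≤ n)]
    simp only [pBracket, map_sum, map_pow, Polynomial.aeval_X]
    exact hξ.geom_sum_eq_zero h1
  -- aeval of pFactorial m ≠ 0 for m < n
  have hne : ∀ m : ℕ, m < n → Polynomial.aeval ξ (pFactorial m) ≠ 0 := by
    intro m hm
    rw [pFactorial, map_prod]
    apply Finset.prod_ne_zero_iff.mpr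
    intro i hi
    simp only [pBracket, map_sum, map_pow, Polynomial.aeval_X]
    rw [geom_sum_eq (hξ.ne_one h1)]
    refine div_ne_zero (sub_ne_zero.mpr ?_) (sub_ne_zero.mpr (hξ.ne_one h1))
    exact hξ.pow_ne_one_of_pos_of_lt (Nat.succ_ne_zero i)
      (lt_of_le_of_lt (Nat.succ_le_of_lt (Finset.mem_range.mp hi)) hm)
  rw [hrhs] at this
  rcases mul_eq_zero.mp this with h | h
  · exact h
  · rcases mul_eq_zero.mp h with h | h
    · exact absurd h (hne _ (by omega))
    · exact absurd h (hne _ hkn)
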